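/- Let m ≥ 2 be an integer, α ∈ (0,1), and μ a finite nonzero Borel measure on T = {0,1,...,m-1}^ℕ with μ-a.e. finite upper α-densities and positive lower α-densities. Then for every positive integer i, the essential supremum of Θ^{α,*}(μ,x)/Θ_{α,*}(μ,x) is at least max(m^{αi}/⌊m^{αi}⌋, ⌈m^{αi}⌉/m^{αi}). -/

import Mathlib

open MeasureTheory Filter Set ENNReal

open Classical in
noncomputable def tdist {m : ℕ} (a b : ℕ → Fin m) : ℝ :=
  if h : ∃ n, a n ≠ b n then (m : ℝ) ^ (-(Nat.find h : ℤ)) else 0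

def cyl {m : ℕ} (n : ℕ) (x : ℕ → Fin m) : Set (ℕ → Fin m) :=
  {y | ∀ i < n, y i = x i}

def msupp {m : ℕ} (μ : Measure (ℕ → Fin m)) : Set (ℕ → Fin m) :=
  {x | ∀ n : ℕ, 0 < μ (cyl n x)}

noncomputable def fdens {m : ℕ} (μ : Measure (ℕ → Fin m)) (α : ℝ) (n : ℕ)
    (x : ℕ → Fin m) : ℝ :=
  (m : ℝ) ^ (α * n) * (μ (cyl n x)).toReal

noncomputable def thetaUpper {m : ℕ} (μ : Measure (ℕ → Fin m)) (α : ℝ)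
    (x : ℕ → Fin m) : ℝ≥0∞ :=
  Filter.limsup (fun n : ℕ => ENNReal.ofReal ((m : ℝ) ^ (α * n)) * μ (cyl n x)) atTop

noncomputable def thetaLower {m : ℕ} (μ : Measure (ℕ → Fin m)) (α : ℝ)
    (x : ℕ → Fin m) : ℝ≥0∞ :=
  Filter.liminf (fun n : ℕ => ENNReal.ofReal ((m : ℝ) ^ (α * n)) * μ (cyl n x)) atTop

namespace MarstrandAux

open Topology

variable {m : ℕ}



variable {m : ℕ}

lemma mem_cyl_self (n : ℕ) (x : ℕ → Fin m) : x ∈ cyl n x := fun _ _ => rfl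

lemma cyl_anti {n k : ℕ} (h : n ≤ k) (x : ℕ → Fin m) : cyl k x ⊆ cyl n x :=
  fun _ hy i hi => hy i (lt_of_lt_of_le hi h)

lemma cyl_eq_of_mem {n : ℕ} {x y : ℕ → Fin m} (h : y ∈ cyl n x) : cyl n y = cyl n x := by
  ext z
  constructor
  · exact fun hz i hi => (hz i hi).trans (h i hi)
  · exact fun hz i hi => (hz i hi).trans (h i hi).symm

lemma measurableSet_cyl (n : ℕ) (x : ℕ → Fin m) : MeasurableSet (cyl n x) := by
  have : cyl n x = ⋂ i ∈ Finset.range n, (fun y : ℕ → Fin m => y i) ⁻¹' {x i} := by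
    ext z; simp [cyl, Set.mem_iInter]
  rw [this]
  exact MeasurableSet.biInter (Finset.range n).countable_toSet
    (fun i _ => (measurable_pi_apply i) (MeasurableSet.singleton _))

def cylw {n : ℕ} (w : Fin n → Fin m) : Set (ℕ → Fin m) := {y | ∀ j : Fin n, y j = w j}

lemma cylw_proj_eq (n : ℕ) (x : ℕ → Fin m) : cylw (fun j : Fin n => x j) = cyl n x := by
  ext z
  constructor
  · exact fun hz i hi => hz ⟨i, hi⟩
  · exact fun hz j => hz j j.isLt

lemma mem_cylw_proj (n : ℕ) (x : ℕ → Fin m) : x ∈ cylw (fun j : Fin n => x j) :=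
  fun _ => rfl

lemma cylw_eq_cyl_of_mem {n : ℕ} {w : Fin n → Fin m} {y : ℕ → Fin m} (h : y ∈ cylw w) :
    cylw w = cyl n y := by
  have hw : (fun j : Fin n => y j) = w := funext fun j => h j
  rw [← cylw_proj_eq, hw]

lemma measurableSet_cylw {n : ℕ} (w : Fin n → Fin m) : MeasurableSet (cylw w) := by
  have : cylw w = ⋂ j : Fin n, (fun y : ℕ → Fin m => y j) ⁻¹' {w j} := by
    ext z; simp [cylw, Set.mem_iInter]
  rw [this]
  exact MeasurableSet.iInter (fun j => (measurable_pi_apply _) (MeasurableSet.singleton _))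

lemma cylw_disjoint {n : ℕ} {w w' : Fin n → Fin m} (h : w ≠ w') :
    Disjoint (cylw w) (cylw w') := by
  rw [Set.disjoint_left]
  intro y hy hy'
  exact h (funext fun j => (hy j).symm.trans (hy' j))

lemma iUnion_cylw (n : ℕ) : (⋃ w : Fin n → Fin m, cylw w) = Set.univ := by
  ext x
  simp only [Set.mem_iUnion, Set.mem_univ, iff_true]
  exact ⟨fun j => x j, mem_cylw_proj n x⟩


def Cylindrical (n : ℕ) (F : Set (ℕ → Fin m)) : Prop := ∀ x ∈ F, cyl n x ⊆ F

lemma Cylindrical.mono {n n' : ℕ} {F : Set (ℕ → Fin m)} (h : n ≤ n')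
    (hF : Cylindrical n F) : Cylindrical n' F :=
  fun x hx => (cyl_anti h x).trans (hF x hx)

lemma Cylindrical.compl {n : ℕ} {F : Set (ℕ → Fin m)} (hF : Cylindrical n F) :
    Cylindrical n Fᶜ := by
  intro x hx y hy hyF
  have h1 : cyl n y = cyl n x := cyl_eq_of_mem hy
  have : x ∈ cyl n y := h1 ▸ mem_cyl_self n x
  exact hx (hF y hyF this)

lemma Cylindrical.iUnion {ι : Sort*} {n : ℕ} {F : ι → Set (ℕ → Fin m)}
    (hF : ∀ i, Cylindrical n (F i)) : Cylindrical n (⋃ i, F i) := by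
  intro x hx
  rcases Set.mem_iUnion.1 hx with ⟨i, hi⟩
  exact (hF i x hi).trans (Set.subset_iUnion F i)

lemma Cylindrical.eq_biUnion {n : ℕ} {F : Set (ℕ → Fin m)} (hF : Cylindrical n F) :
    F = ⋃ w ∈ {w : Fin n → Fin m | cylw w ⊆ F}, cylw w := by
  ext x
  constructor
  · intro hx
    refine Set.mem_biUnion (?_ : cylw (fun j : Fin n => x j) ⊆ F) (mem_cylw_proj n x)
    rw [cylw_proj_eq]
    exact hF x hx
  · intro hx
    rcases Set.mem_iUnion₂.1 hx with ⟨w, hw, hxw⟩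
    exact hw hxw

lemma Cylindrical.measurableSet {n : ℕ} {F : Set (ℕ → Fin m)} (hF : Cylindrical n F) :
    MeasurableSet F := by
  rw [hF.eq_biUnion]
  exact MeasurableSet.biUnion (Set.to_countable _) (fun w _ => measurableSet_cylw w)

section approx
variable (μ : Measure (ℕ → Fin m)) [IsFiniteMeasure μ]

def ApproxProp (A : Set (ℕ → Fin m)) : Prop :=
  MeasurableSet A ∧ ∀ ε : ℝ≥0∞, 0 < ε → ∃ n F, Cylindrical n F ∧ μ (symmDiff A F) ≤ ε

theorem approxProp_of_measurableSet {A : Set (ℕ → Fin m)} (hA : MeasurableSet A) :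
    ApproxProp μ A := by
  let 𝓜 : MeasurableSpace (ℕ → Fin m) :=
    { MeasurableSet' := ApproxProp μ
      measurableSet_empty := ⟨MeasurableSet.empty, fun ε hε =>
        ⟨0, ∅, fun x hx => hx.elim, by simp⟩⟩
      measurableSet_compl := by
        rintro B ⟨hBm, hBa⟩
        refine ⟨hBm.compl, fun ε hε => ?_⟩
        obtain ⟨n, F, hF, hμF⟩ := hBa ε hε
        exact ⟨n, Fᶜ, hF.compl, by rwa [compl_symmDiff_compl]⟩
      measurableSet_iUnion := by
        intro f hf
        have hSm : MeasurableSet (⋃ i, f i) := MeasurableSet.iUnion (fun i => (hf i).1)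
        refine ⟨hSm, fun ε hε => ?_⟩
        have hAccm : ∀ J, MeasurableSet (Set.accumulate f J) := by
          intro J
          rw [Set.accumulate_def]
          exact MeasurableSet.biUnion (Set.to_countable _) (fun i _ => (hf i).1)
        have hdes : Tendsto (fun J => μ ((⋃ i, f i) \ Set.accumulate f J)) atTop (𝓝 0) := by
          have h0 : (⋂ J, (⋃ i, f i) \ Set.accumulate f J) = ∅ := by
            rw [← Set.diff_iUnion, Set.iUnion_accumulate, Set.diff_self]
          have ht := tendsto_measure_iInter_atTop (μ := μ)
            (fun J => ((hSm.diff (hAccm J)).nullMeasurableSet))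
            (fun a b hab => Set.diff_subset_diff_right (Set.monotone_accumulate hab))
            ⟨0, measure_ne_top μ _⟩
          rw [h0, measure_empty] at ht
          exact ht
        obtain ⟨J, hJ⟩ := (hdes.eventually (gt_mem_nhds (ENNReal.half_pos hε.ne'))).exists
        have hpos : (0 : ℝ≥0∞) < ε / 2 / (J + 1) :=
          ENNReal.div_pos (ENNReal.half_pos hε.ne').ne' (by simp)
        have hch : ∀ i : ℕ, ∃ n F, Cylindrical n F ∧ μ (symmDiff (f i) F) ≤ ε / 2 / (J + 1) :=
          fun i => (hf i).2 _ hpos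
        choose nn FF hFF hμFF using hch
        refine ⟨(Finset.range (J + 1)).sup nn, ⋃ i ∈ Finset.range (J + 1), FF i, ?_, ?_⟩
        · exact Cylindrical.iUnion fun i => Cylindrical.iUnion fun hi =>
            (hFF i).mono (Finset.le_sup hi)
        · have hsub : symmDiff (⋃ i, f i) (⋃ i ∈ Finset.range (J + 1), FF i) ⊆
              ((⋃ i, f i) \ Set.accumulate f J) ∪
                ⋃ i ∈ Finset.range (J + 1), symmDiff (f i) (FF i) := by
            intro z hz
            rcases Set.mem_symmDiff.1 hz with ⟨hzS, hzF⟩ | ⟨hzF, hzS⟩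
            · by_cases hzA : z ∈ Set.accumulate f J
              · rcases Set.mem_iUnion₂.1 (by rwa [Set.accumulate_def] at hzA) with ⟨i, hiJ, hzi⟩
                refine Or.inr (Set.mem_biUnion (Finset.mem_range.2 (Nat.lt_succ_of_le hiJ)) ?_)
                refine Set.mem_symmDiff.2 (Or.inl ⟨hzi, fun hFi => hzF ?_⟩)
                exact Set.mem_biUnion (Finset.mem_range.2 (Nat.lt_succ_of_le hiJ)) hFi
              · exact Or.inl ⟨hzS, hzA⟩
            · rcases Set.mem_iUnion₂.1 hzF with ⟨i, hiJ, hzi⟩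
              refine Or.inr (Set.mem_biUnion hiJ ?_)
              exact Set.mem_symmDiff.2 (Or.inr ⟨hzi, fun h => hzS (Set.mem_iUnion.2 ⟨i, h⟩)⟩)
          calc μ (symmDiff (⋃ i, f i) (⋃ i ∈ Finset.range (J + 1), FF i))
              ≤ μ (((⋃ i, f i) \ Set.accumulate f J) ∪
                ⋃ i ∈ Finset.range (J + 1), symmDiff (f i) (FF i)) := measure_mono hsub
            _ ≤ μ ((⋃ i, f i) \ Set.accumulate f J) +
                μ (⋃ i ∈ Finset.range (J + 1), symmDiff (f i) (FF i)) := measure_union_le _ _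
            _ ≤ ε / 2 + ∑ i ∈ Finset.range (J + 1), μ (symmDiff (f i) (FF i)) := by
                exact add_le_add hJ.le (measure_biUnion_finset_le _ _)
            _ ≤ ε / 2 + ∑ _i ∈ Finset.range (J + 1), ε / 2 / (J + 1) := by
                gcongr with i hi
                exact hμFF i
            _ ≤ ε / 2 + ε / 2 := by
                rw [Finset.sum_const, Finset.card_range, nsmul_eq_mul]
                gcongr
                exact_mod_cast ENNReal.mul_div_le
            _ = ε := ENNReal.add_halves ε }
  suffices hle : MeasurableSpace.pi ≤ 𝓜 from hle A hA
  refine iSup_le fun i => ?_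
  intro s hs
  obtain ⟨t, _, rfl⟩ := hs
  refine ⟨(measurable_pi_apply i) (MeasurableSet.of_discrete (s := t)), fun ε hε => ?_⟩
  refine ⟨i + 1, (fun x : ℕ → Fin m => x i) ⁻¹' t, ?_, by simp [symmDiff_self]⟩
  intro x hx y hy
  simp only [Set.mem_preimage] at hx ⊢
  rwa [hy i (Nat.lt_succ_self i)]


end approx
open Classical in
/-- Key step: an ENNReal helper -/
lemma delta_bound {μ : Measure (ℕ → Fin m)} [IsFiniteMeasure μ] {A C : Set (ℕ → Fin m)}
    (hA : MeasurableSet A) {δ : ℝ≥0∞} (hδ1 : δ ≤ 1)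
    (h : μ (A ∩ C) < (1 - δ) * μ C ∨ μ (A ∩ C) = 0) : δ * μ C ≤ μ (C \ A) := by
  have hsum : μ (C ∩ A) + μ (C \ A) = μ C := measure_inter_add_diff C hA
  rcases h with h | h
  · have h2 : μ C ≤ (1 - δ) * μ C + μ (C \ A) := by
      calc μ C = μ (C ∩ A) + μ (C \ A) := hsum.symm
        _ ≤ (1 - δ) * μ C + μ (C \ A) := by
            rw [Set.inter_comm]; exact add_le_add h.le le_rfl
    have h3 : (1 - δ) * μ C + δ * μ C = μ C := by
      rw [← add_mul, tsub_add_cancel_of_le hδ1, one_mul]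
    have h2' : (1 - δ) * μ C + δ * μ C ≤ (1 - δ) * μ C + μ (C \ A) := h3.symm ▸ h2
    exact (WithTop.add_le_add_iff_left (ENNReal.mul_ne_top
      (ne_top_of_le_ne_top one_ne_top tsub_le_self) (measure_ne_top μ C))).1 h2'
  · have : μ (C \ A) = μ C := by
      rw [← hsum, Set.inter_comm, h, zero_add]
    rw [this]
    calc δ * μ C ≤ 1 * μ C := by gcongr
      _ = μ C := one_mul _

open Classical in
theorem exists_full_cyl (μ : Measure (ℕ → Fin m)) [IsFiniteMeasure μ]
    {A : Set (ℕ → Fin m)} (hA : MeasurableSet A) (hApos : 0 < μ A)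
    {δ : ℝ≥0∞} (hδ0 : 0 < δ) (hδ1 : δ ≤ 1) (n0 : ℕ) :
    ∃ n z, n0 ≤ n ∧ z ∈ A ∧ 0 < μ (A ∩ cyl n z) ∧
      (1 - δ) * μ (cyl n z) ≤ μ (A ∩ cyl n z) := by
  have hδtop : δ ≠ ⊤ := ne_top_of_le_ne_top one_ne_top hδ1
  set ε : ℝ≥0∞ := δ * μ A / 4 with hε
  have hμAtop : μ A ≠ ⊤ := measure_ne_top μ A
  have hεpos : 0 < ε := ENNReal.div_pos (ENNReal.mul_pos hδ0.ne' hApos.ne').ne' (by simp)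
  obtain ⟨hAm, happ⟩ := approxProp_of_measurableSet μ hA
  obtain ⟨n', F, hF', hμF⟩ := happ ε hεpos
  set n := max n' n0 with hn
  have hF : Cylindrical n F := hF'.mono (le_max_left _ _)
  by_contra hcon
  push_neg at hcon
  -- every cylinder piece of F is either light on A or not nearly full
  have key : ∀ w : Fin n → Fin m, cylw w ⊆ F →
      δ * μ (cylw w) ≤ μ (cylw w \ A) := by
    intro w hw
    refine delta_bound hA hδ1 ?_
    rcases eq_or_lt_of_le (show 0 ≤ μ (A ∩ cylw w) from zero_le) with h0 | hpos
    · exact Or.inr h0.symm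
    · left
      rcases nonempty_of_measure_ne_zero hpos.ne' with ⟨y, hyA, hyC⟩
      have hcyl : cylw w = cyl n y := cylw_eq_cyl_of_mem hyC
      rw [hcyl]
      exact hcon n y (le_max_right _ _) hyA (by rwa [hcyl] at hpos)
  -- sum over the pieces of F
  set SF : Finset (Fin n → Fin m) := Finset.univ.filter (fun w => cylw w ⊆ F) with hSF
  have hFU : F = ⋃ w ∈ SF, cylw w := by
    rw [hF.eq_biUnion]
    ext y
    simp only [Set.mem_iUnion, Set.mem_setOf_eq, hSF, Finset.mem_filter, Finset.mem_univ,
      true_and]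
  have hdisj : (↑SF : Set (Fin n → Fin m)).PairwiseDisjoint cylw :=
    fun w _ w' _ hww' => cylw_disjoint hww'
  have hμFsum : μ F = ∑ w ∈ SF, μ (cylw w) := by
    rw [hFU]
    exact measure_biUnion_finset hdisj (fun w _ => measurableSet_cylw w)
  have hμFAsum : μ (F \ A) = ∑ w ∈ SF, μ (cylw w \ A) := by
    have hset : F \ A = ⋃ w ∈ SF, (cylw w \ A) := by
      rw [hFU]
      ext y
      constructor
      · rintro ⟨hyF, hyA⟩
        rcases Set.mem_iUnion₂.1 hyF with ⟨w, hw, hyw⟩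
        exact Set.mem_iUnion₂.2 ⟨w, hw, hyw, hyA⟩
      · intro hy
        rcases Set.mem_iUnion₂.1 hy with ⟨w, hw, hyw, hyA⟩
        exact ⟨Set.mem_iUnion₂.2 ⟨w, hw, hyw⟩, hyA⟩
    rw [hset]
    exact measure_biUnion_finset
      (fun w hw w' hw' hww' => ((cylw_disjoint hww').mono Set.diff_subset Set.diff_subset))
      (fun w _ => (measurableSet_cylw w).diff hA)
  have hkey2 : δ * μ F ≤ μ (F \ A) := by
    rw [hμFsum, hμFAsum, Finset.mul_sum]
    refine Finset.sum_le_sum fun w hw => ?_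
    exact key w (by simpa [hSF, Finset.mem_filter] using hw)
  -- μ (F \ A) ≤ ε and μ A ≤ μ F + ε
  have h1 : μ (F \ A) ≤ ε := le_trans (measure_mono fun z hz =>
    Set.mem_symmDiff.2 (Or.inr ⟨hz.1, hz.2⟩)) hμF
  have h2 : μ A ≤ μ F + ε := by
    calc μ A ≤ μ (F ∪ (A \ F)) := measure_mono (fun z hz => by
          by_cases h : z ∈ F
          · exact Or.inl h
          · exact Or.inr ⟨hz, h⟩)
      _ ≤ μ F + μ (A \ F) := measure_union_le _ _
      _ ≤ μ F + ε := add_le_add le_rfl (le_trans (measure_mono fun z hz =>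
          Set.mem_symmDiff.2 (Or.inl ⟨hz.1, hz.2⟩)) hμF)
  -- contradiction: δ μA ≤ δ μF + δ ε ≤ ε + δ ε ≤ 2 ε = δ μA / 2
  have h3 : δ * μ A ≤ 2 * ε := by
    calc δ * μ A ≤ δ * (μ F + ε) := by gcongr
      _ = δ * μ F + δ * ε := by rw [mul_add]
      _ ≤ ε + 1 * ε := add_le_add (hkey2.trans h1) (by gcongr)
      _ = 2 * ε := by ring
  have h4 : 2 * ε = δ * μ A / 2 := by
    rw [hε]
    rw [ENNReal.div_eq_inv_mul, ENNReal.div_eq_inv_mul, ← mul_assoc]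
    congr 1
    rw [show (4 : ℝ≥0∞) = 2 * 2 by norm_num, ENNReal.mul_inv (by norm_num) (by norm_num)]
    rw [← mul_assoc, ENNReal.mul_inv_cancel (by norm_num) (by norm_num), one_mul]
  rw [h4] at h3
  have hpos : 0 < δ * μ A := ENNReal.mul_pos hδ0.ne' hApos.ne'
  have hnetop : δ * μ A ≠ ⊤ := ENNReal.mul_ne_top hδtop hμAtop
  exact absurd h3 (not_le.2 (ENNReal.half_lt_self hpos.ne' hnetop))


open Classical in
theorem exists_point_all_full (μ : Measure (ℕ → Fin m)) [IsFiniteMeasure μ]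
    {A : Set (ℕ → Fin m)} (hA : MeasurableSet A)
    {δ : ℝ≥0∞} (hδ0 : 0 < δ) (hδ1 : δ ≤ 1) {n1 : ℕ} {z : ℕ → Fin m}
    (hsmall : μ (cyl n1 z \ A) < δ * μ (A ∩ cyl n1 z)) :
    ∃ x, x ∈ A ∧ x ∈ cyl n1 z ∧
      ∀ n, n1 ≤ n → (1 - δ) * μ (cyl n x) ≤ μ (A ∩ cyl n x) := by
  have hδtop : δ ≠ ⊤ := ne_top_of_le_ne_top one_ne_top hδ1
  set B := cyl n1 z with hB
  set BadIdx : Set (Σ n : ℕ, Fin n → Fin m) :=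
    {p | n1 ≤ p.1 ∧ cylw p.2 ⊆ B ∧ (cylw p.2).Nonempty ∧
      μ (A ∩ cylw p.2) < (1 - δ) * μ (cylw p.2) ∧
      ∀ y ∈ cylw p.2, ∀ n', n1 ≤ n' → n' < p.1 →
        (1 - δ) * μ (cyl n' y) ≤ μ (A ∩ cyl n' y)} with hBadDef
  have hmain : ∀ p : Σ n : ℕ, Fin n → Fin m, ∀ q : Σ n : ℕ, Fin n → Fin m,
      p ∈ BadIdx → q ∈ BadIdx → p.1 ≤ q.1 → p ≠ q → Disjoint (cylw p.2) (cylw q.2) := by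
    rintro ⟨n, w⟩ ⟨n', w'⟩ hp hq hle hne
    rw [Set.disjoint_left]
    intro y hy hy'
    obtain ⟨hn1, hsub, hnon, hbad, hmin⟩ := hp
    obtain ⟨hn1', hsub', hnon', hbad', hmin'⟩ := hq
    simp only at hy hy' hbad hmin hbad' hmin' hle
    have e1 : cylw w = cyl n y := cylw_eq_cyl_of_mem hy
    rcases eq_or_lt_of_le hle with heq | hlt
    · subst heq
      apply hne
      have hww : w = w' := funext fun j => ((hy j).symm).trans (hy' j)
      rw [hww]
    · have h2 := hmin' y hy' n hn1 hlt
      rw [← e1] at h2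
      exact absurd hbad (not_lt.2 h2)
  have hdisj : Pairwise (Function.onFun Disjoint
      (fun p : BadIdx => cylw (p : Σ n : ℕ, Fin n → Fin m).2)) := by
    rintro p q hpq
    have hne : (p : Σ n : ℕ, Fin n → Fin m) ≠ q := fun h => hpq (Subtype.ext h)
    rcases le_total (p : Σ n : ℕ, Fin n → Fin m).1 (q : Σ n : ℕ, Fin n → Fin m).1 with h | h
    · exact hmain _ _ p.2 q.2 h hne
    · exact (hmain _ _ q.2 p.2 h (Ne.symm hne)).symm
  set U : Set (ℕ → Fin m) := ⋃ p : BadIdx, cylw (p : Σ n : ℕ, Fin n → Fin m).2 with hU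
  have hUB : U ⊆ B := Set.iUnion_subset fun p => p.2.2.1
  have hmeasp : ∀ p : BadIdx, MeasurableSet (cylw (p : Σ n : ℕ, Fin n → Fin m).2) :=
    fun p => measurableSet_cylw _
  have hsum1 : μ U = ∑' p : BadIdx, μ (cylw (p : Σ n : ℕ, Fin n → Fin m).2) :=
    measure_iUnion hdisj hmeasp
  have hsum2 : μ (U \ A) = ∑' p : BadIdx, μ (cylw (p : Σ n : ℕ, Fin n → Fin m).2 \ A) := by
    rw [hU, Set.iUnion_diff]
    exact measure_iUnion
      (fun p q hpq => ((hdisj hpq).mono Set.diff_subset Set.diff_subset))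
      (fun p => (hmeasp p).diff hA)
  have hUbound : δ * μ U ≤ μ (U \ A) := by
    rw [hsum1, hsum2, ← ENNReal.tsum_mul_left]
    refine ENNReal.tsum_le_tsum fun p => ?_
    exact delta_bound hA hδ1 (Or.inl p.2.2.2.2.1)
  have hUlt : μ U < μ (A ∩ B) := by
    have h1 : δ * μ U ≤ μ (B \ A) :=
      hUbound.trans (measure_mono (Set.diff_subset_diff_left hUB))
    have h2 : δ * μ U < δ * μ (A ∩ B) := lt_of_le_of_lt h1 hsmall
    exact (ENNReal.mul_lt_mul_iff_right hδ0.ne' hδtop).1 h2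
  by_contra hcon
  push_neg at hcon
  have hcover : A ∩ B ⊆ U := by
    intro x hx
    obtain ⟨n', hn'1, hn'bad⟩ := hcon x hx.1 hx.2
    have hex : ∃ k, n1 ≤ k ∧ ¬((1 - δ) * μ (cyl k x) ≤ μ (A ∩ cyl k x)) :=
      ⟨n', hn'1, not_le.2 hn'bad⟩
    obtain ⟨hn1, hnbad⟩ := Nat.find_spec hex
    have hBx : cyl n1 x = B := cyl_eq_of_mem hx.2
    refine Set.mem_iUnion.2 ⟨⟨⟨Nat.find hex, fun j => x j⟩, ?_⟩, mem_cylw_proj _ x⟩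
    refine ⟨hn1, ?_, ⟨x, mem_cylw_proj _ x⟩, ?_, ?_⟩
    · rw [cylw_proj_eq, ← hBx]
      exact cyl_anti hn1 x
    · rw [cylw_proj_eq]
      exact not_le.1 hnbad
    · intro y hy n' hn'le hn'lt
      rw [cylw_proj_eq] at hy
      have hyx : y ∈ cyl n' x := cyl_anti (le_of_lt hn'lt) x hy
      have he : cyl n' y = cyl n' x := cyl_eq_of_mem hyx
      have hnotbad := Nat.find_min hex hn'lt
      push_neg at hnotbad
      rw [he]
      exact hnotbad hn'le
  exact absurd (measure_mono hcover) (not_le.2 hUlt)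


lemma measurable_measure_cyl (μ : Measure (ℕ → Fin m)) (n : ℕ) :
    Measurable fun x : ℕ → Fin m => μ (cyl n x) := by
  have heq : (fun x : ℕ → Fin m => μ (cyl n x)) =
      (fun w : Fin n → Fin m => μ (cylw w)) ∘ (fun x (j : Fin n) => x j) := by
    funext x
    simp only [Function.comp_apply]
    rw [cylw_proj_eq]
  rw [heq]
  exact (measurable_of_countable _).comp
    (measurable_pi_lambda _ fun j => measurable_pi_apply _)

lemma measurable_adens (μ : Measure (ℕ → Fin m)) (α : ℝ) (n : ℕ) :
    Measurable fun x : ℕ → Fin m =>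
      ENNReal.ofReal ((m : ℝ) ^ (α * n)) * μ (cyl n x) :=
  (measurable_measure_cyl μ n).const_mul _

lemma measurable_thetaUpper (μ : Measure (ℕ → Fin m)) (α : ℝ) :
    Measurable (thetaUpper μ α) :=
  Measurable.limsup fun n => measurable_adens μ α n

lemma measurable_thetaLower (μ : Measure (ℕ → Fin m)) (α : ℝ) :
    Measurable (thetaLower μ α) :=
  Measurable.liminf fun n => measurable_adens μ α n


lemma exists_eps {N bb t : ℝ} {k : ℕ} (hkN : (k : ℝ) < N) (hNK : N < (k : ℝ) + 1)
    (htb : t < bb) :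
    ∃ ε : ℝ, 0 < ε ∧ ε < 1 ∧ N * (1 + ε) ^ 2 < ((k : ℝ) + 1) * (1 - ε) ∧
      (k : ℝ) * (1 + ε) ^ 2 < N * (1 - ε) ^ 2 ∧ t * (1 + ε) ^ 3 < bb * (1 - ε) ^ 2 := by
  have hc1 : Tendsto (fun ε : ℝ => N * (1 + ε) ^ 2) (𝓝[>] 0) (𝓝 N) := by
    have : Continuous fun ε : ℝ => N * (1 + ε) ^ 2 := by continuity
    have ht := (this.tendsto 0).mono_left (nhdsWithin_le_nhds (s := Set.Ioi (0:ℝ)))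
    norm_num at ht
    exact ht
  have hc1' : Tendsto (fun ε : ℝ => ((k : ℝ) + 1) * (1 - ε)) (𝓝[>] 0) (𝓝 ((k : ℝ) + 1)) := by
    have : Continuous fun ε : ℝ => ((k : ℝ) + 1) * (1 - ε) := by continuity
    have ht := (this.tendsto 0).mono_left (nhdsWithin_le_nhds (s := Set.Ioi (0:ℝ)))
    norm_num at ht
    exact ht
  have hc2 : Tendsto (fun ε : ℝ => (k : ℝ) * (1 + ε) ^ 2) (𝓝[>] 0) (𝓝 (k : ℝ)) := by
    have : Continuous fun ε : ℝ => (k : ℝ) * (1 + ε) ^ 2 := by continuity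
    have ht := (this.tendsto 0).mono_left (nhdsWithin_le_nhds (s := Set.Ioi (0:ℝ)))
    norm_num at ht
    exact ht
  have hc2' : Tendsto (fun ε : ℝ => N * (1 - ε) ^ 2) (𝓝[>] 0) (𝓝 N) := by
    have : Continuous fun ε : ℝ => N * (1 - ε) ^ 2 := by continuity
    have ht := (this.tendsto 0).mono_left (nhdsWithin_le_nhds (s := Set.Ioi (0:ℝ)))
    norm_num at ht
    exact ht
  have hc3 : Tendsto (fun ε : ℝ => t * (1 + ε) ^ 3) (𝓝[>] 0) (𝓝 t) := by
    have : Continuous fun ε : ℝ => t * (1 + ε) ^ 3 := by continuity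
    have ht := (this.tendsto 0).mono_left (nhdsWithin_le_nhds (s := Set.Ioi (0:ℝ)))
    norm_num at ht
    exact ht
  have hc3' : Tendsto (fun ε : ℝ => bb * (1 - ε) ^ 2) (𝓝[>] 0) (𝓝 bb) := by
    have : Continuous fun ε : ℝ => bb * (1 - ε) ^ 2 := by continuity
    have ht := (this.tendsto 0).mono_left (nhdsWithin_le_nhds (s := Set.Ioi (0:ℝ)))
    norm_num at ht
    exact ht
  have e1 := hc1.eventually_lt hc1' hNK
  have e2 := hc2.eventually_lt hc2' hkN
  have e3 := hc3.eventually_lt hc3' htb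
  have e4 : ∀ᶠ ε : ℝ in 𝓝[>] 0, ε < 1 :=
    (gt_mem_nhds (show (0 : ℝ) < 1 by norm_num)).filter_mono nhdsWithin_le_nhds
  have e5 : ∀ᶠ ε : ℝ in 𝓝[>] 0, 0 < ε := self_mem_nhdsWithin
  obtain ⟨ε, h1, h2, h3, h4, h5⟩ := (e1.and (e2.and (e3.and (e4.and e5)))).exists
  exact ⟨ε, h5, h4, h1, h2, h3⟩

end MarstrandAux

open MarstrandAux in
set_option maxHeartbeats 2000000 in
theorem marstrand_lower_bound_power (m : ℕ) (hm : 2 ≤ m) (α : ℝ)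
    (hα : α ∈ Set.Ioo (0 : ℝ) 1) (μ : Measure (ℕ → Fin m)) [IsFiniteMeasure μ]
    (hμ : μ ≠ 0)
    (hae : ∀ᵐ x ∂μ, thetaUpper μ α x < ⊤ ∧ 0 < thetaLower μ α x)
    (i : ℕ) (hi : 1 ≤ i) :
    ENNReal.ofReal (max ((m : ℝ) ^ (α * i) / (⌊(m : ℝ) ^ (α * i)⌋₊ : ℝ))
        ((⌈(m : ℝ) ^ (α * i)⌉₊ : ℝ) / (m : ℝ) ^ (α * i))) ≤
      essSup (fun x => thetaUpper μ α x / thetaLower μ α x) μ := by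
  classical
  obtain ⟨hα0, hα1⟩ := hα
  have hm1 : (1 : ℝ) < m := by exact_mod_cast Nat.lt_of_lt_of_le Nat.one_lt_two hm
  have hm0 : (0 : ℝ) < m := lt_trans one_pos hm1
  set N : ℝ := (m : ℝ) ^ (α * i) with hNdef
  set k : ℕ := ⌊N⌋₊ with hkdef
  set K : ℕ := ⌈N⌉₊ with hKdef
  set bb : ℝ := max (N / (k : ℝ)) ((K : ℝ) / N) with hbbdef
  have hαi : 0 < α * i := mul_pos hα0 (by exact_mod_cast hi)
  have hN1 : 1 < N := Real.one_lt_rpow_iff_of_pos hm0 |>.2 (Or.inl ⟨hm1, hαi⟩)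
  have hNpos : 0 < N := lt_trans one_pos hN1
  have hk1 : 1 ≤ k := Nat.le_floor (by exact_mod_cast hN1.le)
  have hkpos : (0 : ℝ) < k := by exact_mod_cast hk1
  have hkN : (k : ℝ) ≤ N := Nat.floor_le hNpos.le
  have hNK : N ≤ K := Nat.le_ceil N
  set L := thetaLower μ α with hLdef
  set U := thetaUpper μ α with hUdef
  set a : ℕ → (ℕ → Fin m) → ℝ≥0∞ :=
    fun n y => ENNReal.ofReal ((m : ℝ) ^ (α * n)) * μ (cyl n y) with hadef
  have hLlim : ∀ y, L y = Filter.liminf (fun n => a n y) atTop := fun y => rfl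
  have hUlim : ∀ y, U y = Filter.limsup (fun n => a n y) atTop := fun y => rfl
  have hLU : ∀ y, L y ≤ U y := fun y => liminf_le_limsup
  have hae1 : ∀ᵐ x ∂μ, (1 : ℝ≥0∞) ≤ U x / L x := by
    filter_upwards [hae] with x ⟨hUx, hLx⟩
    rw [ENNReal.le_div_iff_mul_le (Or.inl hLx.ne') (Or.inl (((hLU x).trans_lt hUx)).ne),
      one_mul]
    exact hLU x
  have hess1 : (1 : ℝ≥0∞) ≤ essSup (fun x => U x / L x) μ := by
    have h1 := essSup_mono_ae (μ := μ) hae1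
    have h2 : essSup (fun _ : ℕ → Fin m => (1 : ℝ≥0∞)) μ = 1 := essSup_const _ hμ
    rwa [h2] at h1
  by_cases hbb1 : bb ≤ 1
  · calc ENNReal.ofReal bb ≤ ENNReal.ofReal 1 := ENNReal.ofReal_le_ofReal hbb1
      _ = 1 := ENNReal.ofReal_one
      _ ≤ _ := hess1
  push_neg at hbb1
  by_contra hcontra
  push_neg at hcontra
  set S : ℝ≥0∞ := essSup (fun x => U x / L x) μ with hSdef
  obtain ⟨t', hSt', ht'b⟩ := exists_between hcontra
  have ht'top : t' ≠ ⊤ := (ht'b.trans_le le_top).ne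
  set t : ℝ := t'.toReal with htdef
  have hoft : ENNReal.ofReal t = t' := ENNReal.ofReal_toReal ht'top
  have htb : t < bb := (ENNReal.lt_ofReal_iff_toReal_lt ht'top).1 ht'b
  have ht1 : 1 < t' := lt_of_le_of_lt hess1 hSt'
  have ht0 : 0 < t := by
    have h1 : (1 : ℝ≥0∞).toReal < t'.toReal :=
      (ENNReal.toReal_lt_toReal (by norm_num) ht'top).2 ht1
    simp only [ENNReal.toReal_one] at h1
    exact lt_trans one_pos h1
  have hkNs : (k : ℝ) < N := by
    rcases lt_or_eq_of_le hkN with h | h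
    · exact h
    · exfalso
      have hKk : (K : ℝ) = k := by
        rw [hKdef, hkdef, ← h, Nat.ceil_natCast, Nat.floor_natCast]
      have hbe : bb = 1 := by
        rw [hbbdef, hKk, ← h]
        simp [div_self hkpos.ne']
      rw [hbe] at hbb1
      exact absurd hbb1 (lt_irrefl 1)
  have hNKs : N < (K : ℝ) := by
    rcases lt_or_eq_of_le hNK with h | h
    · exact h
    · exfalso
      have : (k : ℝ) = N := by rw [hkdef, h, Nat.floor_natCast]
      exact absurd this hkNs.ne
  have hKk1 : K = k + 1 := by
    have h1 : K ≤ k + 1 := Nat.ceil_le_floor_add_one N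
    have h2 : k + 1 ≤ K := by
      have : (k : ℝ) < K := lt_trans hkNs hNKs
      exact_mod_cast this
    omega
  have hNk1 : N < (k : ℝ) + 1 := by
    rw [hKk1] at hNKs
    exact_mod_cast hNKs
  obtain ⟨ε, hε0, hε1, hc1, hc2, hc3⟩ := exists_eps hkNs hNk1 htb
  set ρ : ℝ := 1 + ε with hρdef
  have hρ1 : 1 < ρ := by rw [hρdef]; linarith
  have hρ0 : 0 < ρ := lt_trans one_pos hρ1
  have h1ε : 0 < 1 - ε := by linarith
  have hU_le : ∀ᵐ x ∂μ, U x < ⊤ ∧ 0 < L x ∧ U x ≤ ENNReal.ofReal t * L x := by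
    filter_upwards [hae, ae_le_essSup (fun x => U x / L x)] with x hx hless
    obtain ⟨hUx, hLx⟩ := hx
    refine ⟨hUx, hLx, ?_⟩
    have hLtop : L x ≠ ⊤ := ((hLU x).trans_lt hUx).ne
    have hdiv : U x / L x < ENNReal.ofReal t := lt_of_le_of_lt hless (hoft ▸ hSt')
    rw [ENNReal.div_lt_iff (Or.inl hLx.ne') (Or.inl hLtop)] at hdiv
    exact hdiv.le
  set G0 : Set (ℕ → Fin m) :=
    {x | U x < ⊤ ∧ 0 < L x ∧ U x ≤ ENNReal.ofReal t * L x} with hG0def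
  have hG0ae : μ G0ᶜ = 0 := ae_iff.1 hU_le
  set G : Set (ℕ → Fin m) := (toMeasurable μ G0ᶜ)ᶜ with hGdef
  have hGm : MeasurableSet G := (measurableSet_toMeasurable μ _).compl
  have hGsub : G ⊆ G0 := compl_subset_comm.2 (subset_toMeasurable μ _)
  have hGc : μ Gᶜ = 0 := by
    rw [hGdef, compl_compl, measure_toMeasurable]
    exact hG0ae
  have hGpos : 0 < μ G := by
    by_contra h
    push_neg at h
    have h0 : μ G = 0 := le_antisymm h zero_le
    have huniv : μ Set.univ = 0 := by
      have h2 := measure_union_le (μ := μ) G Gᶜ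
      rw [Set.union_compl_self, h0, hGc, add_zero] at h2
      exact le_antisymm h2 zero_le
    exact hμ (Measure.measure_univ_eq_zero.1 huniv)
  -- slicing
  set Lsl : ℤ → Set (ℕ → Fin m) := fun j =>
    {x | ENNReal.ofReal (ρ ^ j) ≤ L x ∧ L x ≤ ENNReal.ofReal (ρ ^ (j + 1))} with hLsl
  set Usl : ℤ → Set (ℕ → Fin m) := fun j =>
    {x | ENNReal.ofReal (ρ ^ j) ≤ U x ∧ U x ≤ ENNReal.ofReal (ρ ^ (j + 1))} with hUsl
  have hcover : G ⊆ ⋃ p : ℤ × ℤ, (G ∩ Lsl p.1 ∩ Usl p.2) := by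
    intro x hx
    obtain ⟨hUx, hLx, _⟩ := hGsub hx
    have hLtop : L x ≠ ⊤ := ((hLU x).trans_lt hUx).ne
    have hLtR : 0 < (L x).toReal := ENNReal.toReal_pos hLx.ne' hLtop
    have hUtR : 0 < (U x).toReal :=
      ENNReal.toReal_pos (lt_of_lt_of_le hLx (hLU x)).ne' hUx.ne
    obtain ⟨j1, hj1⟩ := exists_mem_Ico_zpow hLtR hρ1
    obtain ⟨j2, hj2⟩ := exists_mem_Ico_zpow hUtR hρ1
    refine Set.mem_iUnion.2 ⟨(j1, j2), ⟨⟨hx, ?_, ?_⟩, ?_, ?_⟩⟩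
    · exact ENNReal.ofReal_le_of_le_toReal hj1.1
    · exact (ENNReal.le_ofReal_iff_toReal_le hLtop (by positivity)).2 hj1.2.le
    · exact ENNReal.ofReal_le_of_le_toReal hj2.1
    · exact (ENNReal.le_ofReal_iff_toReal_le hUx.ne (by positivity)).2 hj2.2.le
  have hposslice : ∃ p : ℤ × ℤ, 0 < μ (G ∩ Lsl p.1 ∩ Usl p.2) := by
    by_contra h
    push_neg at h
    have h0 : μ (⋃ p : ℤ × ℤ, (G ∩ Lsl p.1 ∩ Usl p.2)) = 0 :=
      measure_iUnion_null fun p => le_antisymm (h p) zero_le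
    exact absurd (le_antisymm ((measure_mono hcover).trans h0.le) zero_le) hGpos.ne'
  obtain ⟨⟨j1, j2⟩, hA0pos⟩ := hposslice
  set l0 : ℝ := ρ ^ j1 with hl0def
  set u0 : ℝ := ρ ^ j2 with hu0def
  have hl0 : 0 < l0 := zpow_pos hρ0 _
  have hu0 : 0 < u0 := zpow_pos hρ0 _
  have hzpow1 : ρ ^ (j1 + 1) = l0 * ρ := by rw [hl0def, zpow_add_one₀ hρ0.ne']
  have hzpow2 : ρ ^ (j2 + 1) = u0 * ρ := by rw [hu0def, zpow_add_one₀ hρ0.ne']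
  set A0 : Set (ℕ → Fin m) := G ∩ Lsl j1 ∩ Usl j2 with hA0def
  have hA0m : MeasurableSet A0 := by
    have e1 : Lsl j1 = L ⁻¹' (Set.Icc (ENNReal.ofReal (ρ ^ j1))
        (ENNReal.ofReal (ρ ^ (j1 + 1)))) := by
      ext y; simp [hLsl, Set.mem_Icc]
    have e2 : Usl j2 = U ⁻¹' (Set.Icc (ENNReal.ofReal (ρ ^ j2))
        (ENNReal.ofReal (ρ ^ (j2 + 1)))) := by
      ext y; simp [hUsl, Set.mem_Icc]
    refine (hGm.inter ?_).inter ?_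
    · rw [e1]; exact (measurable_thetaLower μ α) measurableSet_Icc
    · rw [e2]; exact (measurable_thetaUpper μ α) measurableSet_Icc
  -- uniform eventual bounds
  set AE : ℕ → Set (ℕ → Fin m) := fun n0 =>
    {x | x ∈ A0 ∧ ∀ n, n0 ≤ n →
      ENNReal.ofReal (l0 * (1 - ε)) < a n x ∧ a n x < ENNReal.ofReal (u0 * ρ ^ 2)}
    with hAEdef
  have hA0cover : A0 ⊆ ⋃ n0, AE n0 := by
    intro x hx
    obtain ⟨⟨hxG, hxL⟩, hxU⟩ := hx
    have hev1 : ∀ᶠ n in atTop, ENNReal.ofReal (l0 * (1 - ε)) < a n x :=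
      Filter.eventually_lt_of_lt_liminf (by
      rw [← hLlim x]
      calc ENNReal.ofReal (l0 * (1 - ε)) < ENNReal.ofReal l0 := by
            rw [ENNReal.ofReal_lt_ofReal_iff hl0]; nlinarith
        _ ≤ L x := hxL.1)
    have hev2 : ∀ᶠ n in atTop, a n x < ENNReal.ofReal (u0 * ρ ^ 2) :=
      Filter.eventually_lt_of_limsup_lt (by
      rw [← hUlim x]
      calc U x ≤ ENNReal.ofReal (ρ ^ (j2 + 1)) := hxU.2
        _ = ENNReal.ofReal (u0 * ρ) := by rw [hzpow2]
        _ < ENNReal.ofReal (u0 * ρ ^ 2) := by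
            rw [ENNReal.ofReal_lt_ofReal_iff (by positivity)]
            nlinarith [mul_pos (mul_pos hu0 hρ0) (sub_pos.2 hρ1)])
    obtain ⟨n0, hn0⟩ := Filter.eventually_atTop.1 (hev1.and hev2)
    exact Set.mem_iUnion.2 ⟨n0, ⟨⟨hxG, hxL⟩, hxU⟩, hn0⟩
  have hAEpos : ∃ n0, 0 < μ (AE n0) := by
    by_contra h
    push_neg at h
    have h0 : μ (⋃ n0, AE n0) = 0 :=
      measure_iUnion_null fun n0 => le_antisymm (h n0) zero_le
    exact absurd (le_antisymm ((measure_mono hA0cover).trans h0.le) zero_le) hA0pos.ne'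
  obtain ⟨n0, hApos⟩ := hAEpos
  set A : Set (ℕ → Fin m) := AE n0 with hAdef
  have hAm : MeasurableSet A := by
    have e3 : A = A0 ∩ ⋂ n : ℕ, ⋂ _ : n0 ≤ n,
        ((fun x => a n x) ⁻¹' Set.Ioi (ENNReal.ofReal (l0 * (1 - ε)))) ∩
        ((fun x => a n x) ⁻¹' Set.Iio (ENNReal.ofReal (u0 * ρ ^ 2))) := by
      ext y
      constructor
      · rintro ⟨h1, h2⟩
        exact ⟨h1, Set.mem_iInter.2 fun n => Set.mem_iInter.2 fun hn =>
          ⟨(h2 n hn).1, (h2 n hn).2⟩⟩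
      · rintro ⟨h1, h2⟩
        refine ⟨h1, fun n hn => ?_⟩
        have h3 := Set.mem_iInter.1 (Set.mem_iInter.1 h2 n) hn
        exact ⟨h3.1, h3.2⟩
    rw [e3]
    exact hA0m.inter (MeasurableSet.iInter fun n => MeasurableSet.iInter fun _ =>
      ((measurable_adens μ α n) measurableSet_Ioi).inter
        ((measurable_adens μ α n) measurableSet_Iio))
  have hAsub : ∀ y ∈ A, ∀ n, n0 ≤ n →
      ENNReal.ofReal (l0 * (1 - ε)) < a n y ∧ a n y < ENNReal.ofReal (u0 * ρ ^ 2) :=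
    fun y hy => hy.2
  have hAbounds : ∀ y ∈ A, ENNReal.ofReal l0 ≤ L y ∧ L y ≤ ENNReal.ofReal (l0 * ρ)
      ∧ ENNReal.ofReal u0 ≤ U y ∧ U y ≤ ENNReal.ofReal (u0 * ρ) := by
    intro y hy
    obtain ⟨⟨⟨hyG, hyL⟩, hyU⟩, _⟩ := hy
    exact ⟨hyL.1, hzpow1 ▸ hyL.2, hyU.1, hzpow2 ▸ hyU.2⟩
  have hu0t : u0 ≤ t * (l0 * ρ) := by
    obtain ⟨y, hy⟩ := nonempty_of_measure_ne_zero hApos.ne'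
    obtain ⟨h1, h2, h3, h4⟩ := hAbounds y hy
    have hyG : y ∈ G0 := hGsub hy.1.1.1
    have hchain : ENNReal.ofReal u0 ≤ ENNReal.ofReal (t * (l0 * ρ)) := by
      calc ENNReal.ofReal u0 ≤ U y := h3
        _ ≤ ENNReal.ofReal t * L y := hyG.2.2
        _ ≤ ENNReal.ofReal t * ENNReal.ofReal (l0 * ρ) := by gcongr
        _ = ENNReal.ofReal (t * (l0 * ρ)) := by rw [← ENNReal.ofReal_mul ht0.le]
    rwa [ENNReal.ofReal_le_ofReal_iff (by positivity)] at hchain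
  -- nearly full cylinder at level ≥ n0
  obtain ⟨n1, z, hn1n0, hzA, hABpos, hABfull⟩ :=
    exists_full_cyl μ hAm hApos (δ := ENNReal.ofReal (ε / 2))
      (by rw [ENNReal.ofReal_pos]; positivity)
      (by rw [← ENNReal.ofReal_one]; exact ENNReal.ofReal_le_ofReal (by linarith)) n0
  set B1 := cyl n1 z with hB1def
  have hone : (1 : ℝ≥0∞) - ENNReal.ofReal (ε / 2) = ENNReal.ofReal (1 - ε / 2) := by
    rw [← ENNReal.ofReal_one, ← ENNReal.ofReal_sub _ (by positivity)]
  have hdiff : μ (B1 \ A) ≤ ENNReal.ofReal (ε / 2) * μ B1 := by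
    have hsum : μ (B1 ∩ A) + μ (B1 \ A) = μ B1 := measure_inter_add_diff B1 hAm
    have h1 : ENNReal.ofReal (1 - ε / 2) * μ B1 ≤ μ (B1 ∩ A) := by
      rw [Set.inter_comm]
      exact hone ▸ hABfull
    have h2 : μ (B1 \ A) = μ B1 - μ (B1 ∩ A) :=
      ENNReal.eq_sub_of_add_eq (measure_ne_top μ _) (by rw [add_comm]; exact hsum)
    rw [h2]
    calc μ B1 - μ (B1 ∩ A) ≤ μ B1 - ENNReal.ofReal (1 - ε / 2) * μ B1 :=
          tsub_le_tsub_left h1 _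
      _ = (1 - ENNReal.ofReal (1 - ε / 2)) * μ B1 := by
          rw [ENNReal.sub_mul (fun _ _ => measure_ne_top μ _), one_mul]
      _ = ENNReal.ofReal (ε / 2) * μ B1 := by
          congr 1
          rw [← ENNReal.ofReal_one, ← ENNReal.ofReal_sub _ (by linarith)]
          norm_num
  have hμB1pos : 0 < μ B1 := lt_of_lt_of_le hABpos (measure_mono Set.inter_subset_right)
  have hsmall : μ (B1 \ A) < ENNReal.ofReal ε * μ (A ∩ B1) := by
    calc μ (B1 \ A) ≤ ENNReal.ofReal (ε / 2) * μ B1 := hdiff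
      _ < ENNReal.ofReal (ε * (1 - ε / 2)) * μ B1 := by
          refine (ENNReal.mul_lt_mul_iff_left hμB1pos.ne' (measure_ne_top μ _)).2 ?_
          rw [ENNReal.ofReal_lt_ofReal_iff (by nlinarith)]
          nlinarith
      _ = ENNReal.ofReal ε * (ENNReal.ofReal (1 - ε / 2) * μ B1) := by
          rw [← mul_assoc, ← ENNReal.ofReal_mul hε0.le]
      _ ≤ ENNReal.ofReal ε * μ (A ∩ B1) := by
          gcongr
          rw [← hone]
          exact hABfull
  obtain ⟨x, hxA, hxB1, hfull0⟩ := exists_point_all_full μ hAm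
    (δ := ENNReal.ofReal ε) (by rw [ENNReal.ofReal_pos]; exact hε0)
    (by rw [← ENNReal.ofReal_one]; exact ENNReal.ofReal_le_ofReal hε1.le) hsmall
  have hfull : ∀ n, n1 ≤ n →
      ENNReal.ofReal (1 - ε) * μ (cyl n x) ≤ μ (A ∩ cyl n x) := by
    intro n hn
    have h := hfull0 n hn
    rwa [show (1 : ℝ≥0∞) - ENNReal.ofReal ε = ENNReal.ofReal (1 - ε) by
      rw [← ENNReal.ofReal_one, ← ENNReal.ofReal_sub _ hε0.le]] at h
  -- scaling identity
  have hscale : ∀ n : ℕ, ENNReal.ofReal ((m : ℝ) ^ (α * ((n + i : ℕ) : ℝ)))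
      = ENNReal.ofReal N * ENNReal.ofReal ((m : ℝ) ^ (α * (n : ℝ))) := by
    intro n
    rw [← ENNReal.ofReal_mul hNpos.le]
    congr 1
    rw [hNdef, ← Real.rpow_add hm0]
    congr 1
    push_cast
    ring
  have hofN0 : (ENNReal.ofReal N) ≠ 0 := by
    rw [Ne, ENNReal.ofReal_eq_zero, not_le]; exact hNpos
  have hof1ε0 : (ENNReal.ofReal (1 - ε)) ≠ 0 := by
    rw [Ne, ENNReal.ofReal_eq_zero, not_le]; exact h1ε
  -- children counting
  have hchild : ∀ n : ℕ, n1 ≤ n → ∃ q : ℕ, 1 ≤ q ∧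
      ((q : ℝ≥0∞) * ENNReal.ofReal (l0 * (1 - ε)) ≤ ENNReal.ofReal N * a n x) ∧
      (ENNReal.ofReal (1 - ε) * (ENNReal.ofReal N * a n x) ≤
        (q : ℝ≥0∞) * ENNReal.ofReal (u0 * ρ ^ 2)) ∧
      ∃ amax : ℝ≥0∞, amax < ENNReal.ofReal (u0 * ρ ^ 2) ∧
        ENNReal.ofReal (1 - ε) * (ENNReal.ofReal N * a n x) ≤ (q : ℝ≥0∞) * amax := by
    intro n hn
    have hnn0 : n0 ≤ n := le_trans hn1n0 hn
    set ni := n + i with hnidef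
    have hnni : n ≤ ni := Nat.le_add_right n i
    have hnin0 : n0 ≤ ni := le_trans hnn0 hnni
    set P : ℝ≥0∞ := ENNReal.ofReal ((m : ℝ) ^ (α * (ni : ℝ))) with hPdef
    have hPa : ENNReal.ofReal N * a n x = P * μ (cyl n x) := by
      rw [hadef]
      simp only
      rw [← mul_assoc, hPdef, hnidef, hscale n]
    have haP : ∀ y, a ni y = P * μ (cyl ni y) := fun y => rfl
    set Sf : Finset (Fin ni → Fin m) := Finset.univ.filter
      (fun w => cylw w ⊆ cyl n x ∧ (cylw w ∩ A).Nonempty) with hSfdef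
    have hf3 : ∀ w ∈ Sf, ENNReal.ofReal (l0 * (1 - ε)) < P * μ (cylw w) ∧
        P * μ (cylw w) < ENNReal.ofReal (u0 * ρ ^ 2) := by
      intro w hw
      obtain ⟨hsub, y, hyw, hyA⟩ := (Finset.mem_filter.1 hw).2
      have hcw : cylw w = cyl ni y := cylw_eq_cyl_of_mem hyw
      rw [hcw, ← haP y]
      exact hAsub y hyA ni hnin0
    have hdisjS : (↑Sf : Set (Fin ni → Fin m)).PairwiseDisjoint cylw :=
      fun w _ w' _ hww' => cylw_disjoint hww'
    have hf1 : ∑ w ∈ Sf, μ (cylw w) ≤ μ (cyl n x) := by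
      rw [← measure_biUnion_finset hdisjS (fun w _ => measurableSet_cylw w)]
      exact measure_mono (Set.iUnion₂_subset fun w hw => (Finset.mem_filter.1 hw).2.1)
    have hf2 : μ (A ∩ cyl n x) ≤ ∑ w ∈ Sf, μ (cylw w) := by
      refine le_trans (measure_mono ?_) (measure_biUnion_finset_le Sf _)
      intro y hy
      have hyB : cyl ni y ⊆ cyl n x := by
        have h1 := cyl_anti hnni y
        rwa [cyl_eq_of_mem hy.2] at h1
      refine Set.mem_biUnion (Finset.mem_filter.2 ⟨Finset.mem_univ _, ?_,
        ⟨y, mem_cylw_proj _ y, hy.1⟩⟩) (mem_cylw_proj _ y)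
      rw [cylw_proj_eq]
      exact hyB
    have hanx := hAsub x hxA n hnn0
    have hBpos : μ (cyl n x) ≠ 0 := by
      intro h0
      have h := hanx.1
      rw [hadef] at h
      simp only [h0, mul_zero] at h
      exact absurd h (by simp)
    have hABpos' : 0 < μ (A ∩ cyl n x) := by
      refine lt_of_lt_of_le ?_ (hfull n hn)
      exact ENNReal.mul_pos hof1ε0 hBpos
    obtain ⟨y0, hy0⟩ := nonempty_of_measure_ne_zero hABpos'.ne'
    have hy0sub : cyl ni y0 ⊆ cyl n x := by
      have h1 := cyl_anti hnni y0
      rwa [cyl_eq_of_mem hy0.2] at h1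
    have hSfne : Sf.Nonempty := by
      refine ⟨fun j : Fin ni => y0 j, Finset.mem_filter.2 ⟨Finset.mem_univ _, ?_,
        ⟨y0, mem_cylw_proj _ y0, hy0.1⟩⟩⟩
      rw [cylw_proj_eq]
      exact hy0sub
    have hchain1 : ENNReal.ofReal (1 - ε) * (ENNReal.ofReal N * a n x) ≤
        P * ∑ w ∈ Sf, μ (cylw w) := by
      rw [hPa]
      calc ENNReal.ofReal (1 - ε) * (P * μ (cyl n x))
          = P * (ENNReal.ofReal (1 - ε) * μ (cyl n x)) := by ring
        _ ≤ P * μ (A ∩ cyl n x) := by gcongr; exact hfull n hn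
        _ ≤ P * ∑ w ∈ Sf, μ (cylw w) := by gcongr
    refine ⟨Sf.card, Finset.card_pos.2 hSfne, ?_, ?_, ?_⟩
    · rw [hPa]
      calc (Sf.card : ℝ≥0∞) * ENNReal.ofReal (l0 * (1 - ε))
          = Sf.card • ENNReal.ofReal (l0 * (1 - ε)) := (nsmul_eq_mul _ _).symm
        _ ≤ ∑ w ∈ Sf, P * μ (cylw w) :=
            Finset.card_nsmul_le_sum Sf _ _ (fun w hw => (hf3 w hw).1.le)
        _ = P * ∑ w ∈ Sf, μ (cylw w) := (Finset.mul_sum _ _ _).symm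
        _ ≤ P * μ (cyl n x) := by gcongr
    · calc ENNReal.ofReal (1 - ε) * (ENNReal.ofReal N * a n x)
          ≤ P * ∑ w ∈ Sf, μ (cylw w) := hchain1
        _ = ∑ w ∈ Sf, P * μ (cylw w) := Finset.mul_sum _ _ _
        _ ≤ Sf.card • ENNReal.ofReal (u0 * ρ ^ 2) :=
            Finset.sum_le_card_nsmul Sf _ _ (fun w hw => (hf3 w hw).2.le)
        _ = (Sf.card : ℝ≥0∞) * ENNReal.ofReal (u0 * ρ ^ 2) := nsmul_eq_mul _ _
    · obtain ⟨wm, hwmS, hwmmax⟩ := Finset.exists_max_image Sf (fun w => μ (cylw w)) hSfne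
      refine ⟨P * μ (cylw wm), (hf3 wm hwmS).2, ?_⟩
      calc ENNReal.ofReal (1 - ε) * (ENNReal.ofReal N * a n x)
          ≤ P * ∑ w ∈ Sf, μ (cylw w) := hchain1
        _ = ∑ w ∈ Sf, P * μ (cylw w) := Finset.mul_sum _ _ _
        _ ≤ Sf.card • (P * μ (cylw wm)) :=
            Finset.sum_le_card_nsmul Sf _ _ (fun w hw => mul_le_mul_right (hwmmax w hw) P)
        _ = (Sf.card : ℝ≥0∞) * (P * μ (cylw wm)) := nsmul_eq_mul _ _
  -- special times
  have hsmalltime : ∃ n, n1 ≤ n ∧ a n x < ENNReal.ofReal (l0 * ρ ^ 2) := by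
    have hlt : Filter.liminf (fun n => a n x) atTop < ENNReal.ofReal (l0 * ρ ^ 2) := by
      rw [← hLlim x]
      calc L x ≤ ENNReal.ofReal (l0 * ρ) := (hAbounds x hxA).2.1
        _ < ENNReal.ofReal (l0 * ρ ^ 2) := by
            rw [ENNReal.ofReal_lt_ofReal_iff (by positivity)]
            nlinarith [mul_pos (mul_pos hl0 hρ0) (sub_pos.2 hρ1)]
    have hfreq : ∃ᶠ n in atTop, a n x < ENNReal.ofReal (l0 * ρ ^ 2) :=
      Filter.frequently_lt_of_liminf_lt (h := hlt)
    obtain ⟨n, hn, h⟩ := (Filter.frequently_atTop.1 hfreq) n1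
    exact ⟨n, hn, h⟩
  have hbigtime : ∃ n, n1 ≤ n ∧ ENNReal.ofReal (u0 * (1 - ε)) < a n x := by
    have hlt : ENNReal.ofReal (u0 * (1 - ε)) < Filter.limsup (fun n => a n x) atTop := by
      rw [← hUlim x]
      calc ENNReal.ofReal (u0 * (1 - ε)) < ENNReal.ofReal u0 := by
            rw [ENNReal.ofReal_lt_ofReal_iff hu0]
            nlinarith
        _ ≤ U x := (hAbounds x hxA).2.2.1
    have hfreq : ∃ᶠ n in atTop, ENNReal.ofReal (u0 * (1 - ε)) < a n x :=
      Filter.frequently_lt_of_lt_limsup (h := hlt)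
    obtain ⟨n, hn, h⟩ := (Filter.frequently_atTop.1 hfreq) n1
    exact ⟨n, hn, h⟩
  obtain ⟨ns, hns1, hnsa⟩ := hsmalltime
  obtain ⟨nb, hnb1, hnba⟩ := hbigtime
  have hnsn0 : n0 ≤ ns := le_trans hn1n0 hns1
  have hnbn0 : n0 ≤ nb := le_trans hn1n0 hnb1
  -- E1: small time
  obtain ⟨q1, hq1pos, hq1b, _, amax, hamaxU, hamaxchain⟩ := hchild ns hns1
  have hq1k : q1 ≤ k := by
    have hlt : (q1 : ℝ≥0∞) * ENNReal.ofReal (l0 * (1 - ε)) <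
        ENNReal.ofReal (N * (l0 * ρ ^ 2)) := by
      calc (q1 : ℝ≥0∞) * ENNReal.ofReal (l0 * (1 - ε)) ≤ ENNReal.ofReal N * a ns x := hq1b
        _ < ENNReal.ofReal N * ENNReal.ofReal (l0 * ρ ^ 2) :=
            (ENNReal.mul_lt_mul_iff_right hofN0 ENNReal.ofReal_ne_top).2 hnsa
        _ = ENNReal.ofReal (N * (l0 * ρ ^ 2)) := (ENNReal.ofReal_mul hNpos.le).symm
    rw [show ((q1 : ℝ≥0∞)) = ENNReal.ofReal (q1 : ℝ) by rw [ENNReal.ofReal_natCast],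
      ← ENNReal.ofReal_mul (Nat.cast_nonneg q1),
      ENNReal.ofReal_lt_ofReal_iff (by positivity)] at hlt
    by_contra hq
    push_neg at hq
    have hcast : ((k : ℝ) + 1) ≤ (q1 : ℝ) := by exact_mod_cast hq
    nlinarith [mul_lt_mul_of_pos_left hc1 hl0,
      mul_le_mul_of_nonneg_right hcast (le_of_lt (mul_pos hl0 h1ε))]
  have hstar : (1 - ε) * (N * (l0 * (1 - ε))) ≤ (k : ℝ) * (u0 * ρ ^ 2) := by
    have hlow : ENNReal.ofReal ((1 - ε) * (N * (l0 * (1 - ε)))) <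
        ENNReal.ofReal (1 - ε) * (ENNReal.ofReal N * a ns x) := by
      rw [ENNReal.ofReal_mul h1ε.le, ENNReal.ofReal_mul hNpos.le]
      refine (ENNReal.mul_lt_mul_iff_right hof1ε0 ENNReal.ofReal_ne_top).2 ?_
      exact (ENNReal.mul_lt_mul_iff_right hofN0 ENNReal.ofReal_ne_top).2 (hAsub x hxA ns hnsn0).1
    have hchain2 : ENNReal.ofReal ((1 - ε) * (N * (l0 * (1 - ε)))) <
        ENNReal.ofReal ((k : ℝ) * (u0 * ρ ^ 2)) := by
      calc ENNReal.ofReal ((1 - ε) * (N * (l0 * (1 - ε))))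
          < ENNReal.ofReal (1 - ε) * (ENNReal.ofReal N * a ns x) := hlow
        _ ≤ (q1 : ℝ≥0∞) * amax := hamaxchain
        _ ≤ (q1 : ℝ≥0∞) * ENNReal.ofReal (u0 * ρ ^ 2) :=
            mul_le_mul_right hamaxU.le _
        _ ≤ (k : ℝ≥0∞) * ENNReal.ofReal (u0 * ρ ^ 2) :=
            mul_le_mul_left (by exact_mod_cast hq1k) _
        _ = ENNReal.ofReal ((k : ℝ) * (u0 * ρ ^ 2)) := by
            rw [ENNReal.ofReal_mul (Nat.cast_nonneg k), ENNReal.ofReal_natCast]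
    rw [ENNReal.ofReal_lt_ofReal_iff (by positivity)] at hchain2
    exact hchain2.le
  -- E2: big time
  obtain ⟨q2, hq2pos, hq2b, hq2a, _⟩ := hchild nb hnb1
  have hq2k : k + 1 ≤ q2 := by
    have hlow : ENNReal.ofReal ((1 - ε) * (N * (u0 * (1 - ε)))) <
        ENNReal.ofReal (1 - ε) * (ENNReal.ofReal N * a nb x) := by
      rw [ENNReal.ofReal_mul h1ε.le, ENNReal.ofReal_mul hNpos.le]
      refine (ENNReal.mul_lt_mul_iff_right hof1ε0 ENNReal.ofReal_ne_top).2 ?_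
      exact (ENNReal.mul_lt_mul_iff_right hofN0 ENNReal.ofReal_ne_top).2 hnba
    have hchain3 : ENNReal.ofReal ((1 - ε) * (N * (u0 * (1 - ε)))) <
        ENNReal.ofReal ((q2 : ℝ) * (u0 * ρ ^ 2)) := by
      calc ENNReal.ofReal ((1 - ε) * (N * (u0 * (1 - ε))))
          < ENNReal.ofReal (1 - ε) * (ENNReal.ofReal N * a nb x) := hlow
        _ ≤ (q2 : ℝ≥0∞) * ENNReal.ofReal (u0 * ρ ^ 2) := hq2a
        _ = ENNReal.ofReal ((q2 : ℝ) * (u0 * ρ ^ 2)) := by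
            rw [ENNReal.ofReal_mul (Nat.cast_nonneg q2), ENNReal.ofReal_natCast]
    rw [ENNReal.ofReal_lt_ofReal_iff (by positivity)] at hchain3
    by_contra hq
    push_neg at hq
    have hcast : (q2 : ℝ) ≤ (k : ℝ) := by
      have : q2 ≤ k := by omega
      exact_mod_cast this
    nlinarith [mul_lt_mul_of_pos_left hc2 hu0,
      mul_le_mul_of_nonneg_right hcast (by positivity : (0:ℝ) ≤ u0 * ρ ^ 2)]
  have hstar2 : ((k : ℝ) + 1) * (l0 * (1 - ε)) ≤ N * (u0 * ρ ^ 2) := by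
    have hchain4 : ENNReal.ofReal (((k : ℝ) + 1) * (l0 * (1 - ε))) ≤
        ENNReal.ofReal (N * (u0 * ρ ^ 2)) := by
      calc ENNReal.ofReal (((k : ℝ) + 1) * (l0 * (1 - ε)))
          = ENNReal.ofReal ((k : ℝ) + 1) * ENNReal.ofReal (l0 * (1 - ε)) :=
            ENNReal.ofReal_mul (by positivity)
        _ ≤ ENNReal.ofReal (q2 : ℝ) * ENNReal.ofReal (l0 * (1 - ε)) :=
            mul_le_mul_left (ENNReal.ofReal_le_ofReal (by exact_mod_cast hq2k)) _
        _ = (q2 : ℝ≥0∞) * ENNReal.ofReal (l0 * (1 - ε)) := by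
            rw [ENNReal.ofReal_natCast]
        _ ≤ ENNReal.ofReal N * a nb x := hq2b
        _ ≤ ENNReal.ofReal N * ENNReal.ofReal (u0 * ρ ^ 2) :=
            mul_le_mul_right ((hAsub x hxA nb hnbn0).2).le _
        _ = ENNReal.ofReal (N * (u0 * ρ ^ 2)) := (ENNReal.ofReal_mul hNpos.le).symm
    rwa [ENNReal.ofReal_le_ofReal_iff (by positivity)] at hchain4
  -- final contradiction
  have hKcast : (K : ℝ) = (k : ℝ) + 1 := by
    rw [hKk1]
    push_cast
    ring
  rcases max_cases (N / (k : ℝ)) ((K : ℝ) / N) with ⟨hbbeq, _⟩ | ⟨hbbeq, _⟩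
  · -- bb = N / k
    have hc3' : t * ρ ^ 3 < (N / (k : ℝ)) * (1 - ε) ^ 2 := by
      rw [← hbbeq]; exact hc3
    have hkt : (k : ℝ) * (t * ρ ^ 3) < N * (1 - ε) ^ 2 := by
      have h' := mul_lt_mul_of_pos_left hc3' hkpos
      rw [show (k : ℝ) * (N / (k : ℝ) * (1 - ε) ^ 2) = N * (1 - ε) ^ 2 by
        field_simp] at h'
      exact h'
    nlinarith [mul_le_mul_of_nonneg_left hu0t (by positivity : (0:ℝ) ≤ (k:ℝ) * ρ ^ 2),
      mul_lt_mul_of_pos_left hkt hl0, hstar]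
  · -- bb = K / N
    have hc3' : t * ρ ^ 3 < ((K : ℝ) / N) * (1 - ε) ^ 2 := by
      rw [← hbbeq]; exact hc3
    have hNt : N * (t * ρ ^ 3) < ((k : ℝ) + 1) * (1 - ε) ^ 2 := by
      have h' := mul_lt_mul_of_pos_left hc3' hNpos
      rw [show N * ((K : ℝ) / N * (1 - ε) ^ 2) = (K : ℝ) * (1 - ε) ^ 2 by
        field_simp, hKcast] at h'
      exact h'
    have hsq : (((k : ℝ) + 1)) * (1 - ε) ^ 2 ≤ ((k : ℝ) + 1) * (1 - ε) := by
      have h1 : (1 - ε) ^ 2 ≤ (1 - ε) := by nlinarith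
      nlinarith [hkpos]
    nlinarith [mul_le_mul_of_nonneg_left hu0t (by positivity : (0:ℝ) ≤ N * ρ ^ 2),
      mul_lt_mul_of_pos_left hNt hl0, mul_le_mul_of_nonneg_left hsq hl0.le, hstar2]
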